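/- Let λ₁ = (3+√5)/2, k = ln λ₁, and c = (λ₁−1)k/(λ₁+1). Suppose w¹, w², u : ℝ → ℝ are twice differentiable and satisfy the geodesic equations: (i) ẅ¹ + 2c·ẇ¹·u̇ − 4c·ẇ²·u̇ = 0; (ii) ẅ² − 2c·ẇ²·u̇ − 4c·ẇ¹·u̇ = 0; (iii) ü + [(1−λ₁^{4u+4})k/λ₁^{2u+2}]·(ẇ¹)² + [2(1+λ₁^{4u+3})(λ₁−1)k/λ₁^{2u+2}]·ẇ¹ẇ² + [(1−λ₁^{4u+2})(λ₁−1)²k/λ₁^{2u+2}]·(ẇ²)² = 0. Then the transformed functions w'¹ = w¹ + w², w'² = w¹ + 2w², u' = u + 1 (i.e., the inverse of the substitution w¹ = 2w'¹ − w'², w² = −w'¹ + w'², u = u' − 1) satisfy the same three equations. That is, the geodesic flow equations on the suspension manifold are invariant under the transformation implementing the identification (w,1) ≡ (Tw,0). -/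

import Mathlib

/-- `λ₁ = (3 + √5)/2`, the expanding eigenvalue of `T = [[1,1],[1,2]]`. -/
noncomputable def lam1 : ℝ := (3 + Real.sqrt 5) / 2

/-- `k = ln λ₁`. -/
noncomputable def kconst : ℝ := Real.log lam1

/-- `c = (λ₁ - 1) k / (λ₁ + 1)`, the coefficient in the geodesic equations. -/
noncomputable def cconst : ℝ := (lam1 - 1) * kconst / (lam1 + 1)

/-- If twice differentiable functions `w¹, w², u : ℝ → ℝ` satisfy
the geodesic equations of the suspension metric, then the transformed functions
`w'¹ = w¹ + w²`, `w'² = w¹ + 2w²`, `u' = u + 1` (the inverse of the substitution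
`w¹ = 2w'¹ - w'²`, `w² = -w'¹ + w'²`, `u = u' - 1`) satisfy the same three equations:
the geodesic flow equations are invariant under the transformation implementing the
identification `(w,1) ≡ (Tw,0)`. -/

lemma lam1_pos : 0 < lam1 := by
  have h := Real.sqrt_nonneg 5
  unfold lam1; linarith

lemma lam1_ne : lam1 ≠ 0 := ne_of_gt lam1_pos

lemma lam1_sq : lam1 ^ 2 = 3 * lam1 - 1 := by
  have h5 : Real.sqrt 5 * Real.sqrt 5 = 5 := Real.mul_self_sqrt (by norm_num)
  unfold lam1; nlinarith [h5]

lemma rpow_shift (x : ℝ) (n : ℕ) : lam1 ^ (x + (n : ℝ)) = lam1 ^ x * lam1 ^ n := by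
  rw [Real.rpow_add lam1_pos, Real.rpow_natCast]

lemma key_alg (a b C D k L : ℝ) (hD : D ≠ 0) (hL0 : L ≠ 0) (hL : L^2 = 3*L - 1) :
    (1 - C*L^6)*k/(D*L^2) * ((a+b)*(a+b))
      + 2*(1+C*L^5)*(L-1)*k/(D*L^2) * ((a+b)*(a+2*b))
      + (1-C*L^4)*(L-1)^2*k/(D*L^2) * ((a+2*b)*(a+2*b))
    = (1 - C*L^2)*k/D * (a*a)
      + 2*(1+C*L)*(L-1)*k/D * (a*b)
      + (1-C)*(L-1)^2*k/D * (b*b) := by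
  field_simp
  linear_combination (k*(b^2 - b^2*L - b^2*L^2 + C*b^2*L^2 + C*b^2*L^3 - C*b^2*L^4
    - 2*a*b*L + 2*a*b*C*L^3)) * hL

theorem geodesic_equations_invariant
    (w1 w2 u : ℝ → ℝ)
    (hw1 : Differentiable ℝ w1) (hw1' : Differentiable ℝ (deriv w1))
    (hw2 : Differentiable ℝ w2) (hw2' : Differentiable ℝ (deriv w2))
    (hu : Differentiable ℝ u) (hu' : Differentiable ℝ (deriv u))
    (eq1 : ∀ t, deriv (deriv w1) t
        + 2 * cconst * deriv w1 t * deriv u t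
        - 4 * cconst * deriv w2 t * deriv u t = 0)
    (eq2 : ∀ t, deriv (deriv w2) t
        - 2 * cconst * deriv w2 t * deriv u t
        - 4 * cconst * deriv w1 t * deriv u t = 0)
    (eq3 : ∀ t, deriv (deriv u) t
        + (1 - lam1 ^ (4 * u t + 4)) * kconst / lam1 ^ (2 * u t + 2)
            * (deriv w1 t * deriv w1 t)
        + 2 * (1 + lam1 ^ (4 * u t + 3)) * (lam1 - 1) * kconst / lam1 ^ (2 * u t + 2)
            * (deriv w1 t * deriv w2 t)
        + (1 - lam1 ^ (4 * u t + 2)) * (lam1 - 1) ^ 2 * kconst / lam1 ^ (2 * u t + 2)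
            * (deriv w2 t * deriv w2 t) = 0) :
    (∀ t, deriv (deriv (fun s => w1 s + w2 s)) t
        + 2 * cconst * deriv (fun s => w1 s + w2 s) t * deriv (fun s => u s + 1) t
        - 4 * cconst * deriv (fun s => w1 s + 2 * w2 s) t * deriv (fun s => u s + 1) t
          = 0) ∧
    (∀ t, deriv (deriv (fun s => w1 s + 2 * w2 s)) t
        - 2 * cconst * deriv (fun s => w1 s + 2 * w2 s) t * deriv (fun s => u s + 1) t
        - 4 * cconst * deriv (fun s => w1 s + w2 s) t * deriv (fun s => u s + 1) t
          = 0) ∧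
    (∀ t, deriv (deriv (fun s => u s + 1)) t
        + (1 - lam1 ^ (4 * (u t + 1) + 4)) * kconst / lam1 ^ (2 * (u t + 1) + 2)
            * (deriv (fun s => w1 s + w2 s) t * deriv (fun s => w1 s + w2 s) t)
        + 2 * (1 + lam1 ^ (4 * (u t + 1) + 3)) * (lam1 - 1) * kconst
            / lam1 ^ (2 * (u t + 1) + 2)
            * (deriv (fun s => w1 s + w2 s) t * deriv (fun s => w1 s + 2 * w2 s) t)
        + (1 - lam1 ^ (4 * (u t + 1) + 2)) * (lam1 - 1) ^ 2 * kconst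
            / lam1 ^ (2 * (u t + 1) + 2)
            * (deriv (fun s => w1 s + 2 * w2 s) t * deriv (fun s => w1 s + 2 * w2 s) t)
          = 0) := by
  have d12 : deriv (fun s => w1 s + w2 s) = fun t => deriv w1 t + deriv w2 t :=
    funext fun t => deriv_add (hw1 t) (hw2 t)
  have d12' : deriv (fun s => w1 s + 2 * w2 s) = fun t => deriv w1 t + 2 * deriv w2 t :=
    funext fun t => by
      rw [deriv_fun_add (hw1 t) ((hw2 t).const_mul 2), deriv_const_mul 2 (hw2 t)]
  have du1 : deriv (fun s => u s + 1) = deriv u :=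
    funext fun t => by simpa using deriv_add_const (f := u) (x := t) 1
  have dd12 : ∀ t, deriv (deriv (fun s => w1 s + w2 s)) t
      = deriv (deriv w1) t + deriv (deriv w2) t := by
    intro t; rw [d12]; exact deriv_add (hw1' t) (hw2' t)
  have dd12' : ∀ t, deriv (deriv (fun s => w1 s + 2 * w2 s)) t
      = deriv (deriv w1) t + 2 * deriv (deriv w2) t := by
    intro t
    rw [d12', deriv_fun_add (hw1' t) ((hw2' t).const_mul 2), deriv_const_mul 2 (hw2' t)]
  have ddu : ∀ t, deriv (deriv (fun s => u s + 1)) t = deriv (deriv u) t := by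
    intro t; rw [du1]
  refine ⟨?_, ?_, ?_⟩
  · intro t
    rw [dd12, d12, d12', du1]
    linear_combination eq1 t + eq2 t
  · intro t
    rw [dd12', d12, d12', du1]
    linear_combination eq1 t + 2 * eq2 t
  · intro t
    rw [ddu, d12, d12']
    simp only
    have e1 : lam1 ^ (4 * (u t + 1) + 4) = lam1 ^ (4 * u t + 2) * lam1 ^ (6 : ℕ) := by
      rw [show (4 * (u t + 1) + 4 : ℝ) = (4 * u t + 2) + ((6 : ℕ) : ℝ) by push_cast; ring,
        rpow_shift]
    have e2 : lam1 ^ (4 * (u t + 1) + 3) = lam1 ^ (4 * u t + 2) * lam1 ^ (5 : ℕ) := by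
      rw [show (4 * (u t + 1) + 3 : ℝ) = (4 * u t + 2) + ((5 : ℕ) : ℝ) by push_cast; ring,
        rpow_shift]
    have e3 : lam1 ^ (4 * (u t + 1) + 2) = lam1 ^ (4 * u t + 2) * lam1 ^ (4 : ℕ) := by
      rw [show (4 * (u t + 1) + 2 : ℝ) = (4 * u t + 2) + ((4 : ℕ) : ℝ) by push_cast; ring,
        rpow_shift]
    have e4 : lam1 ^ (2 * (u t + 1) + 2) = lam1 ^ (2 * u t + 2) * lam1 ^ (2 : ℕ) := by
      rw [show (2 * (u t + 1) + 2 : ℝ) = (2 * u t + 2) + ((2 : ℕ) : ℝ) by push_cast; ring,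
        rpow_shift]
    have e5 : lam1 ^ (4 * u t + 4) = lam1 ^ (4 * u t + 2) * lam1 ^ (2 : ℕ) := by
      rw [show (4 * u t + 4 : ℝ) = (4 * u t + 2) + ((2 : ℕ) : ℝ) by push_cast; ring,
        rpow_shift]
    have e6 : lam1 ^ (4 * u t + 3) = lam1 ^ (4 * u t + 2) * lam1 ^ (1 : ℕ) := by
      rw [show (4 * u t + 3 : ℝ) = (4 * u t + 2) + ((1 : ℕ) : ℝ) by push_cast; ring,
        rpow_shift]
    have hD : lam1 ^ (2 * u t + 2) ≠ 0 := ne_of_gt (Real.rpow_pos_of_pos lam1_pos _)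
    have h3 := eq3 t
    rw [e5, e6] at h3
    rw [e1, e2, e3, e4]
    have hkey := key_alg (deriv w1 t) (deriv w2 t) (lam1 ^ (4 * u t + 2))
      (lam1 ^ (2 * u t + 2)) kconst lam1 hD lam1_ne lam1_sq
    linear_combination h3 + hkey
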